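/- arXiv:1511.08935 — 3 statements merged into one kernel-verified Lean document; each statement's English description precedes it below -/
import Mathlib

section
/- Suppose F : Γ → ℝ is concave and differentiable on an open convex cone Γ ⊆ Sym(n,ℝ) containing all positive multiples μI of the identity, and suppose F satisfies: F(Γ) = (a₀,∞) for a₀ ≥ −∞ with boundary condition F3, condition F4 (F(tr) → ∞ as t → ∞ for all r ∈ Γ), and r·F_r ≥ 0 on Γ. Then for every b ∈ ℝ there exists δ₀ > 0 (depending on F and b) such that trace(F_r(r)) ≥ δ₀ whenever r ∈ Γ and F(r) ≤ b. Specifically, δ₀ may be taken as (F(μI) − b)/μ for μ large enough that F(μI) > b. -/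
/-- The identity matrix as an element of the space of `n × n` arrays. -/
def idm (n : ℕ) : Fin n → Fin n → ℝ := fun i j => if i = j then 1 else 0

/-- Gradient inequality for concave functions: `F y ≤ F x + F'(x)(y - x)`. -/
lemma concave_grad_ineq {E : Type*} [NormedAddCommGroup E] [NormedSpace ℝ E]
    {s : Set E} {F : E → ℝ} (hconc : ConcaveOn ℝ s F) {x y : E}
    (hx : x ∈ s) (hy : y ∈ s) (hd : DifferentiableAt ℝ F x) :
    F y ≤ F x + fderiv ℝ F x (y - x) := by
  set A : ℝ →ᵃ[ℝ] E := AffineMap.lineMap x y with hA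
  have h01 : Set.Icc (0 : ℝ) 1 ⊆ A ⁻¹' s := by
    intro t ht
    have : (1 - t) • x + t • y ∈ s := hconc.1 hx hy (by linarith [ht.2]) ht.1 (by ring)
    simpa [hA, AffineMap.lineMap_apply_module] using this
  have hgI : ConcaveOn ℝ (Set.Icc (0 : ℝ) 1) (F ∘ A) :=
    (hconc.comp_affineMap A).subset h01 (convex_Icc 0 1)
  have hlin : HasDerivAt (fun t : ℝ => A t) (y - x) 0 := by
    have : HasDerivAt (fun t : ℝ => t • (y - x) + x) (y - x) 0 := by
      simpa using ((hasDerivAt_id (0 : ℝ)).smul_const (y - x)).add_const x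
    simpa [hA, AffineMap.lineMap_apply_module'] using this
  have hgd : HasDerivAt (F ∘ A) (fderiv ℝ F x (y - x)) 0 := by
    have hx0 : A (0 : ℝ) = x := by simp [hA]
    have hd' : DifferentiableAt ℝ F (A 0) := by rw [hx0]; exact hd
    have := hd'.hasFDerivAt.comp_hasDerivAt 0 hlin
    rw [hx0] at this
    exact this
  have hslope := hgI.slope_le_of_hasDerivAt (Set.mem_Icc.2 ⟨le_refl 0, zero_le_one⟩)
    (Set.mem_Icc.2 ⟨zero_le_one, le_refl 1⟩) one_pos hgd
  have hA0 : A (0 : ℝ) = x := by simp [hA]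
  have hA1 : A (1 : ℝ) = y := by simp [hA]
  have : F y - F x ≤ fderiv ℝ F x (y - x) := by
    simpa [slope, hA0, hA1] using hslope
  linarith

/-- Condition F5 from F2–F4: if `F` is concave and differentiable on an open convex cone
`Γ` containing all `μI` (`μ > 0`), with `F > a₀` on `Γ`, `F(tr) → ∞` as `t → ∞` (F4),
and `r·F_r ≥ 0` on `Γ`, then for every `b` there is `δ₀ > 0` with
`trace(F_r(r)) ≥ δ₀` whenever `r ∈ Γ` and `F(r) ≤ b`; indeed `δ₀ = (F(μI) − b)/μ`
works for any `μ > 0` with `F(μI) > b`. -/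
theorem stmt12 (n : ℕ) (Γ : Set (Fin n → Fin n → ℝ)) (F : (Fin n → Fin n → ℝ) → ℝ)
    (hopen : IsOpen Γ) (hconv : Convex ℝ Γ)
    (hcone : ∀ t : ℝ, 0 < t → ∀ r ∈ Γ, t • r ∈ Γ)
    (hI : ∀ μ : ℝ, 0 < μ → μ • idm n ∈ Γ)
    (hconc : ConcaveOn ℝ Γ F)
    (hdiff : ∀ r ∈ Γ, DifferentiableAt ℝ F r)
    (a₀ : EReal) (hlow : ∀ r ∈ Γ, a₀ < (F r : EReal))
    (hF4 : ∀ r ∈ Γ, Filter.Tendsto (fun t : ℝ => F (t • r)) Filter.atTop Filter.atTop)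
    (hEuler : ∀ r ∈ Γ, 0 ≤ fderiv ℝ F r r) :
    ∀ b : ℝ,
      (∃ δ₀ > 0, ∀ r ∈ Γ, F r ≤ b → δ₀ ≤ fderiv ℝ F r (idm n)) ∧
      (∀ μ : ℝ, 0 < μ → b < F (μ • idm n) →
        ∀ r ∈ Γ, F r ≤ b → (F (μ • idm n) - b) / μ ≤ fderiv ℝ F r (idm n)) := by
  intro b
  have key : ∀ μ : ℝ, 0 < μ → b < F (μ • idm n) →
      ∀ r ∈ Γ, F r ≤ b → (F (μ • idm n) - b) / μ ≤ fderiv ℝ F r (idm n) := by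
    intro μ hμ hFb r hr hFrb
    have hμI : μ • idm n ∈ Γ := hI μ hμ
    have hgrad := concave_grad_ineq hconc hr hμI (hdiff r hr)
    have hmap : fderiv ℝ F r (μ • idm n - r)
        = μ * fderiv ℝ F r (idm n) - fderiv ℝ F r r := by
      rw [map_sub, map_smul]; rfl
    have heu := hEuler r hr
    have : F (μ • idm n) - b ≤ μ * fderiv ℝ F r (idm n) := by
      rw [hmap] at hgrad; linarith
    rw [div_le_iff₀ hμ]; linarith [this]
  refine ⟨?_, key⟩
  have hIΓ : idm n ∈ Γ := by simpa using hI 1 one_pos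
  have h4 := hF4 (idm n) hIΓ
  obtain ⟨t, ht⟩ := ((h4.eventually_gt_atTop b).and (Filter.eventually_gt_atTop 0)).exists
  exact ⟨(F (t • idm n) - b) / t, div_pos (by linarith [ht.1]) ht.2, key t ht.2 ht.1⟩
end

section
/- Under the same hypotheses as the previous identity (F orthogonally invariant, concave, twice differentiable at r ∈ Γ, D skew-symmetric), the second-variation identity holds: F^{ij}(D²r + 2DrDᵀ + r(D²)ᵀ)_{ij} + F^{ij,kl}(Dr + rDᵀ)_{ij}(Dr + rDᵀ)_{kl} = 0, where F^{ij,kl} = ∂²F/∂r_{ij}∂r_{kl}(r). In the paper's index notation with τ^k_i = D_{ki}: F^{ij}(τ^k_i τ^l_j r_{kl} + τ^k_i τ^l_k r_{jl}) + 2 F^{ij,kl} τ^s_i r_{js} τ^t_k r_{lt} = 0. -/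
open Matrix

attribute [local instance] Matrix.normedAddCommGroup Matrix.normedSpace

section Stmt14Aux

variable {n : ℕ}

private theorem hasDerivAt_entry' {u : ℝ → Matrix (Fin n) (Fin n) ℝ}
    {u' : Matrix (Fin n) (Fin n) ℝ} {x : ℝ} (h : HasDerivAt u u' x) (i j : Fin n) :
    HasDerivAt (fun α => u α i j) (u' i j) x :=
  hasDerivAt_pi.mp (hasDerivAt_pi.mp h i) j

private theorem hasDerivAt_mmul' {u v : ℝ → Matrix (Fin n) (Fin n) ℝ}
    {u' v' : Matrix (Fin n) (Fin n) ℝ} {x : ℝ}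
    (hu : HasDerivAt u u' x) (hv : HasDerivAt v v' x) :
    HasDerivAt (fun α => u α * v α) (u' * v x + u x * v') x := by
  refine hasDerivAt_pi.mpr fun i => hasDerivAt_pi.mpr fun j => ?_
  show HasDerivAt (fun α => (u α * v α) i j) ((u' * v x + u x * v') i j) x
  have key : HasDerivAt (fun α => ∑ k, u α i k * v α k j)
      (∑ k, (u' i k * v x k j + u x i k * v' k j)) x :=
    HasDerivAt.fun_sum fun k _ => (hasDerivAt_entry' hu i k).fun_mul (hasDerivAt_entry' hv k j)
  have e1 : (fun α => (u α * v α) i j) = fun α => ∑ k, u α i k * v α k j := by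
    funext α; rw [Matrix.mul_apply]
  have e2 : (u' * v x + u x * v') i j = ∑ k, (u' i k * v x k j + u x i k * v' k j) := by
    simp [Matrix.add_apply, Matrix.mul_apply, Finset.sum_add_distrib]
  rw [e1, e2]; exact key

private theorem hasDerivAt_mtrans' {u : ℝ → Matrix (Fin n) (Fin n) ℝ}
    {u' : Matrix (Fin n) (Fin n) ℝ} {x : ℝ} (hu : HasDerivAt u u' x) :
    HasDerivAt (fun α => (u α)ᵀ) u'ᵀ x := by
  refine hasDerivAt_pi.mpr fun i => hasDerivAt_pi.mpr fun j => ?_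
  exact hasDerivAt_entry' hu j i

private theorem diffAt_entry' {u : ℝ → Matrix (Fin n) (Fin n) ℝ} {x : ℝ}
    (h : DifferentiableAt ℝ u x) (i j : Fin n) :
    DifferentiableAt ℝ (fun α => u α i j) x :=
  (hasDerivAt_entry' h.hasDerivAt i j).differentiableAt

private theorem diffAt_det' {u : ℝ → Matrix (Fin n) (Fin n) ℝ} {x : ℝ}
    (hu : DifferentiableAt ℝ u x) :
    DifferentiableAt ℝ (fun α => (u α).det) x := by
  have e : (fun α => (u α).det)
      = fun α => ∑ σ : Equiv.Perm (Fin n),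
        (((Equiv.Perm.sign σ : ℤ) : ℝ)) * ∏ i, u α (σ i) i := by
    funext α; rw [Matrix.det_apply']
  rw [e]
  refine DifferentiableAt.fun_sum fun σ _ => (differentiableAt_const _).fun_mul ?_
  exact DifferentiableAt.fun_finsetProd fun i _ => diffAt_entry' hu (σ i) i

private theorem diffAt_adjugate' {u : ℝ → Matrix (Fin n) (Fin n) ℝ} {x : ℝ}
    (hu : DifferentiableAt ℝ u x) :
    DifferentiableAt ℝ (fun α => (u α).adjugate) x := by
  refine differentiableAt_pi.mpr fun i => differentiableAt_pi.mpr fun j => ?_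
  show DifferentiableAt ℝ (fun α => (u α).adjugate i j) x
  have e : (fun α => (u α).adjugate i j)
      = fun α => ((u α).updateRow j (Pi.single i 1)).det := by
    funext α; rw [Matrix.adjugate_apply]
  rw [e]
  refine diffAt_det' ?_
  refine differentiableAt_pi.mpr fun k => differentiableAt_pi.mpr fun l => ?_
  show DifferentiableAt ℝ (fun α => (u α).updateRow j (Pi.single i 1) k l) x
  have e2 : (fun α => (u α).updateRow j (Pi.single i 1) k l)
      = fun α => if k = j then (Pi.single i (1:ℝ) : Fin n → ℝ) l else u α k l := by
    funext α; rw [Matrix.updateRow_apply]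
  rw [e2]
  by_cases h : k = j
  · simp only [h, if_true]; exact differentiableAt_const _
  · simp only [h, if_false]; exact diffAt_entry' hu k l

private theorem hasDerivAt_minv' {u : ℝ → Matrix (Fin n) (Fin n) ℝ}
    {u' : Matrix (Fin n) (Fin n) ℝ} {x : ℝ} (hu : HasDerivAt u u' x)
    (hdet : (u x).det ≠ 0) :
    HasDerivAt (fun α => (u α)⁻¹) (-((u x)⁻¹ * u' * (u x)⁻¹)) x := by
  have hdiff : DifferentiableAt ℝ (fun α => (u α)⁻¹) x := by
    have e : (fun α => (u α)⁻¹) = fun α => ((u α).det)⁻¹ • (u α).adjugate := by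
      funext α; rw [Matrix.inv_def, Ring.inverse_eq_inv']
    rw [e]
    exact ((diffAt_det' hu.differentiableAt).inv hdet).smul (diffAt_adjugate' hu.differentiableAt)
  have hI := hdiff.hasDerivAt
  set I' := deriv (fun α => (u α)⁻¹) x with hI'
  have hev : (fun α => u α * (u α)⁻¹) =ᶠ[nhds x] fun _ => 1 := by
    have hcd : ContinuousAt (fun α => (u α).det) x := (diffAt_det' hu.differentiableAt).continuousAt
    filter_upwards [hcd.eventually_ne hdet] with α hα
    exact Matrix.mul_nonsing_inv _ (isUnit_iff_ne_zero.mpr hα)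
  have h1 : HasDerivAt (fun α => u α * (u α)⁻¹) (u' * (u x)⁻¹ + u x * I') x :=
    hasDerivAt_mmul' hu hI
  have h2 : HasDerivAt (fun α => u α * (u α)⁻¹) 0 x :=
    (hasDerivAt_const x (1 : Matrix (Fin n) (Fin n) ℝ)).congr_of_eventuallyEq hev
  have h3 : u' * (u x)⁻¹ + u x * I' = 0 := h1.unique h2
  have h4 : u x * I' = -(u' * (u x)⁻¹) := by
    rw [eq_neg_iff_add_eq_zero, add_comm]; exact h3
  have h5 : I' = -((u x)⁻¹ * u' * (u x)⁻¹) := by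
    have := congrArg (fun m => (u x)⁻¹ * m) h4
    simp only [← mul_assoc, Matrix.nonsing_inv_mul _ (isUnit_iff_ne_zero.mpr hdet),
      one_mul, mul_neg] at this
    exact this
  rw [← h5]; exact hI

end Stmt14Aux

/-- Second-variation identity for orthogonally invariant functions: with `F` invariant
under orthogonal conjugation, concave and twice differentiable at the symmetric matrix
`r ∈ Γ`, and `D` skew-symmetric,
`F^{ij}(D²r + 2DrDᵀ + r(D²)ᵀ)_{ij} + F^{ij,kl}(Dr + rDᵀ)_{ij}(Dr + rDᵀ)_{kl} = 0`. -/
theorem stmt14 (n : ℕ) (Γ : Set (Matrix (Fin n) (Fin n) ℝ))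
    (F : Matrix (Fin n) (Fin n) ℝ → ℝ)
    (hopen : IsOpen Γ) (hconv : Convex ℝ Γ) (hconc : ConcaveOn ℝ Γ F)
    (hΓinv : ∀ Q : Matrix (Fin n) (Fin n) ℝ, Q * Qᵀ = 1 → ∀ s ∈ Γ, Q * s * Qᵀ ∈ Γ)
    (hFinv : ∀ Q : Matrix (Fin n) (Fin n) ℝ, Q * Qᵀ = 1 → ∀ s ∈ Γ, F (Q * s * Qᵀ) = F s)
    (r : Matrix (Fin n) (Fin n) ℝ) (hr : r ∈ Γ) (hrsym : rᵀ = r)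
    (hF : ContDiffAt ℝ 2 F r)
    (D : Matrix (Fin n) (Fin n) ℝ) (hD : Dᵀ = -D) :
    fderiv ℝ F r (D * D * r + 2 • (D * r * Dᵀ) + r * (D * D)ᵀ)
      + fderiv ℝ (fun s => fderiv ℝ F s (D * r + r * Dᵀ)) r (D * r + r * Dᵀ) = 0 := by
  -- the Cayley-transform curve of orthogonal matrices
  set E : Matrix (Fin n) (Fin n) ℝ := (2⁻¹ : ℝ) • D with hE
  set N : ℝ → Matrix (Fin n) (Fin n) ℝ := fun α => 1 - α • E with hNdef
  set P : ℝ → Matrix (Fin n) (Fin n) ℝ := fun α => 1 + α • E with hPdef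
  set Iv : ℝ → Matrix (Fin n) (Fin n) ℝ := fun α => (N α)⁻¹ with hIvdef
  set Q : ℝ → Matrix (Fin n) (Fin n) ℝ := fun α => Iv α * P α with hQdef
  set q : ℝ → Matrix (Fin n) (Fin n) ℝ := fun α => Iv α * E * Iv α * P α + Iv α * E with hqdef
  set g : ℝ → Matrix (Fin n) (Fin n) ℝ := fun α => Q α * r * (Q α)ᵀ with hgdef
  set gd : ℝ → Matrix (Fin n) (Fin n) ℝ := fun α => q α * r * (Q α)ᵀ + Q α * r * (q α)ᵀ with hgddef
  have hEt : Eᵀ = -E := by rw [hE, Matrix.transpose_smul, hD, smul_neg]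
  have hNt : ∀ α : ℝ, (N α)ᵀ = P α := by
    intro α
    rw [hNdef, hPdef]
    simp [Matrix.transpose_sub, Matrix.transpose_one, Matrix.transpose_smul, hEt,
      smul_neg, sub_neg_eq_add]
  have hN : ∀ x : ℝ, HasDerivAt N (-E) x := by
    intro x
    have h := (hasDerivAt_const x (1 : Matrix (Fin n) (Fin n) ℝ)).sub ((hasDerivAt_id x).smul_const E)
    rw [zero_sub, one_smul] at h
    exact h
  have hP : ∀ x : ℝ, HasDerivAt P E x := by
    intro x
    have h := (hasDerivAt_const x (1 : Matrix (Fin n) (Fin n) ℝ)).add ((hasDerivAt_id x).smul_const E)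
    rw [zero_add, one_smul] at h
    exact h
  have hN0 : N 0 = 1 := by rw [hNdef]; simp
  have hP0 : P 0 = 1 := by rw [hPdef]; simp
  have hdet0 : (N 0).det ≠ 0 := by rw [hN0, Matrix.det_one]; norm_num
  have hcont_det : Continuous fun α => (N α).det := by
    have hd : Differentiable ℝ fun α => (N α).det := fun x => diffAt_det' (hN x).differentiableAt
    exact hd.continuous
  have hSopen : IsOpen {α : ℝ | (N α).det ≠ 0} :=
    isOpen_compl_singleton.preimage hcont_det
  -- orthogonality
  have horth : ∀ x : ℝ, (N x).det ≠ 0 → Q x * (Q x)ᵀ = 1 := by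
    intro x hx
    have hPdet : (P x).det ≠ 0 := by rw [← hNt x, Matrix.det_transpose]; exact hx
    have hQt : (Q x)ᵀ = N x * (P x)⁻¹ := by
      rw [hQdef]
      simp only
      rw [Matrix.transpose_mul, hIvdef]
      simp only
      rw [Matrix.transpose_nonsing_inv, hNt x, ← hNt x, Matrix.transpose_transpose]
    have hcomm : P x * N x = N x * P x := by
      rw [hNdef, hPdef]
      simp only
      set a := x • E
      noncomm_ring
    calc Q x * (Q x)ᵀ = Iv x * P x * (N x * (P x)⁻¹) := by rw [hQt, hQdef]
      _ = Iv x * (P x * N x * (P x)⁻¹) := by rw [mul_assoc, ← mul_assoc (P x)]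
      _ = Iv x * (N x * P x * (P x)⁻¹) := by rw [hcomm]
      _ = Iv x * (N x * (P x * (P x)⁻¹)) := by rw [mul_assoc]
      _ = Iv x * (N x * 1) := by rw [Matrix.mul_nonsing_inv _ (isUnit_iff_ne_zero.mpr hPdet)]
      _ = 1 := by
        rw [mul_one, hIvdef]
        exact Matrix.nonsing_inv_mul _ (isUnit_iff_ne_zero.mpr hx)
  -- derivatives along the curve
  have hIvD : ∀ x : ℝ, (N x).det ≠ 0 → HasDerivAt Iv (Iv x * E * Iv x) x := by
    intro x hx
    have h := hasDerivAt_minv' (hN x) hx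
    rw [hIvdef]
    simpa [mul_neg, neg_mul, neg_neg] using h
  have hkey : ∀ x : ℝ, (N x).det ≠ 0 → HasDerivAt Q (q x) x ∧ HasDerivAt g (gd x) x := by
    intro x hx
    have hIv := hIvD x hx
    have hQd : HasDerivAt Q (q x) x := by
      have h := hasDerivAt_mmul' hIv (hP x)
      rw [hQdef, hqdef]
      exact h
    refine ⟨hQd, ?_⟩
    have hQr : HasDerivAt (fun α => Q α * r) (q x * r) x := by
      simpa using hasDerivAt_mmul' hQd (hasDerivAt_const x r)
    have hQt : HasDerivAt (fun α => (Q α)ᵀ) (q x)ᵀ x := hasDerivAt_mtrans' hQd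
    have h := hasDerivAt_mmul' hQr hQt
    rw [hgdef, hgddef]
    exact h
  -- values at 0
  have hIv0 : Iv 0 = 1 := by rw [hIvdef]; simp only; rw [hN0, inv_one]
  have hQ0 : Q 0 = 1 := by rw [hQdef]; simp only; rw [hIv0, hP0, one_mul]
  have hq0 : q 0 = D := by
    rw [hqdef]; simp only
    rw [hIv0, hP0]
    simp only [one_mul, mul_one]
    rw [hE, ← add_smul]
    norm_num
  have hg0 : g 0 = r := by
    rw [hgdef]; simp only
    rw [hQ0, Matrix.transpose_one, one_mul, mul_one]
  have hgd0v : gd 0 = D * r + r * Dᵀ := by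
    rw [hgddef]; simp only
    rw [hq0, hQ0, Matrix.transpose_one, mul_one, one_mul]
  -- second-order derivatives at 0
  have hIv00 : HasDerivAt Iv E 0 := by
    have h := hIvD 0 hdet0
    rwa [hIv0, one_mul, mul_one] at h
  have hQd0 : HasDerivAt Q D 0 := by
    have h := (hkey 0 hdet0).1
    rwa [hq0] at h
  have hEE : E * E + E * E + E * E + (E * E) = D * D := by
    rw [hE, smul_mul_smul_comm, ← add_smul, ← add_smul, ← add_smul]
    norm_num
  have hq'0 : HasDerivAt q (D * D) 0 := by
    have ha : HasDerivAt (fun α => Iv α * E) (E * E) 0 := by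
      simpa [hIv0] using hasDerivAt_mmul' hIv00 (hasDerivAt_const 0 E)
    have hb : HasDerivAt (fun α => Iv α * E * Iv α) (E * E + E * E) 0 := by
      simpa [hIv0] using hasDerivAt_mmul' ha hIv00
    have hc : HasDerivAt (fun α => Iv α * E * Iv α * P α) (E * E + E * E + E * E) 0 := by
      simpa [hIv0, hP0] using hasDerivAt_mmul' hb (hP 0)
    have h := hc.add ha
    rw [hqdef]
    rwa [hEE] at h
  have hgd'0 : HasDerivAt gd (D * D * r + 2 • (D * r * Dᵀ) + r * (D * D)ᵀ) 0 := by
    have t1 : HasDerivAt (fun α => q α * r) (D * D * r) 0 := by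
      simpa using hasDerivAt_mmul' hq'0 (hasDerivAt_const 0 r)
    have t2 : HasDerivAt (fun α => (Q α)ᵀ) Dᵀ 0 := hasDerivAt_mtrans' hQd0
    have t3 : HasDerivAt (fun α => q α * r * (Q α)ᵀ) (D * D * r + D * r * Dᵀ) 0 := by
      simpa [hQ0, hq0] using hasDerivAt_mmul' t1 t2
    have t4 : HasDerivAt (fun α => Q α * r) (D * r) 0 := by
      simpa using hasDerivAt_mmul' hQd0 (hasDerivAt_const 0 r)
    have t5 : HasDerivAt (fun α => (q α)ᵀ) (D * D)ᵀ 0 := hasDerivAt_mtrans' hq'0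
    have t6 : HasDerivAt (fun α => Q α * r * (q α)ᵀ) (D * r * Dᵀ + r * (D * D)ᵀ) 0 := by
      simpa [hQ0, hq0] using hasDerivAt_mmul' t4 t5
    have h := t3.add t6
    have hval : D * D * r + D * r * Dᵀ + (D * r * Dᵀ + r * (D * D)ᵀ)
        = D * D * r + 2 • (D * r * Dᵀ) + r * (D * D)ᵀ := by abel
    rw [hgddef]
    rwa [hval] at h
  -- the composed function is constant, so its derivative vanishes
  have hdet_ev : ∀ᶠ α in nhds (0 : ℝ), (N α).det ≠ 0 :=
    hcont_det.continuousAt.eventually_ne hdet0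
  have hgc : ContinuousAt g 0 := ((hkey 0 hdet0).2).continuousAt
  have hFd_ev : ∀ᶠ α in nhds (0 : ℝ), DifferentiableAt ℝ F (g α) := by
    have h1 : ∀ᶠ s in nhds r, DifferentiableAt ℝ F s := by
      filter_upwards [hF.eventually (by norm_num)] with s hs
      exact hs.differentiableAt (by norm_num)
    have h2 : Filter.Tendsto g (nhds 0) (nhds r) := by
      have := hgc.tendsto
      rwa [hg0] at this
    exact h2.eventually h1
  have hψ0 : ∀ᶠ α in nhds (0 : ℝ), fderiv ℝ F (g α) (gd α) = 0 := by
    filter_upwards [hdet_ev, hFd_ev] with α hα hFα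
    have hgα := (hkey α hα).2
    have hconst : HasDerivAt (fun β => F (g β)) 0 α := by
      refine (hasDerivAt_const α (F r)).congr_of_eventuallyEq ?_
      have hmem : {β : ℝ | (N β).det ≠ 0} ∈ nhds α := hSopen.mem_nhds hα
      filter_upwards [hmem] with β hβ
      have := hFinv (Q β) (horth β hβ) r hr
      rw [hgdef]
      exact this
    have hchain : HasDerivAt (fun β => F (g β)) (fderiv ℝ F (g α) (gd α)) α :=
      hFα.hasFDerivAt.comp_hasDerivAt α hgα
    exact hchain.unique hconst
  have hF' : DifferentiableAt ℝ (fderiv ℝ F) r :=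
    (hF.fderiv_right (m := 1) (by norm_num)).differentiableAt one_ne_zero
  have hgD0 : HasDerivAt g (D * r + r * Dᵀ) 0 := by
    have h := (hkey 0 hdet0).2
    rwa [hgd0v] at h
  letI : NormedAddCommGroup (Matrix (Fin n) (Fin n) ℝ →L[ℝ] ℝ) := ContinuousLinearMap.toNormedAddCommGroup
  letI : NormedSpace ℝ (Matrix (Fin n) (Fin n) ℝ →L[ℝ] ℝ) := ContinuousLinearMap.toNormedSpace
  have hc : HasDerivAt (fun α => fderiv ℝ F (g α))
      (fderiv ℝ (fderiv ℝ F) r (D * r + r * Dᵀ)) 0 := by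
    have h1 : HasFDerivAt (fderiv ℝ F) (fderiv ℝ (fderiv ℝ F) r) (g 0) := by
      rw [hg0]; exact hF'.hasFDerivAt
    exact h1.comp_hasDerivAt (0 : ℝ) hgD0
  have hψd : HasDerivAt (fun α => fderiv ℝ F (g α) (gd α))
      (fderiv ℝ (fderiv ℝ F) r (D * r + r * Dᵀ) (gd 0) + fderiv ℝ F (g 0)
        (D * D * r + 2 • (D * r * Dᵀ) + r * (D * D)ᵀ)) 0 :=
    hc.clm_apply hgd'0
  have hψconst : HasDerivAt (fun α => fderiv ℝ F (g α) (gd α)) 0 0 :=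
    (hasDerivAt_const 0 (0 : ℝ)).congr_of_eventuallyEq hψ0
  have huniq := hψd.unique hψconst
  rw [hgd0v, hg0] at huniq
  have hsnd : fderiv ℝ (fun s => fderiv ℝ F s (D * r + r * Dᵀ)) r (D * r + r * Dᵀ)
      = fderiv ℝ (fderiv ℝ F) r (D * r + r * Dᵀ) (D * r + r * Dᵀ) := by
    have h := (ContinuousLinearMap.apply ℝ ℝ (D * r + r * Dᵀ)).hasFDerivAt.comp r hF'.hasFDerivAt
    exact congrArg (fun L => L (D * r + r * Dᵀ)) h.fderiv
  rw [hsnd]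
  linarith [huniq]
end

section
/- Let Γ ⊆ Sym(n,ℝ) be an open convex cone and F ∈ C¹(Γ) with F_r > 0 (condition F1) and suppose F is orthogonally invariant with F(Γ) = (a₀, ∞) for finite a₀, F concave, and satisfying F5⁺ in the positive cone K⁺. Then F satisfies condition F6 in K⁺: for r ∈ K⁺ with a ≤ F(r) ≤ b, the quantity ℰ₂ := F^{ij} r_{ik} r_{jk} satisfies ℰ₂ ≤ (F(r) − a₀)|r| ≤ (b − a₀)|r|, where |r| is the spectral norm. In particular ℰ₂/( |r| 𝒯(r)) → 0 as |r| → ∞ if 𝒯(r) → ∞ (condition F5⁺). -/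
open Matrix Topology Filter

/-- Spectral norm of a symmetric matrix: the supremum of its eigenvalues
(for a positive definite matrix this is the operator norm). -/
noncomputable def spec (n : ℕ) (r : Matrix (Fin n) (Fin n) ℝ) : ℝ :=
  if hr : r.IsHermitian then sSup (Set.range hr.eigenvalues) else 0

lemma spec_eig {n : ℕ} {r : Matrix (Fin n) (Fin n) ℝ} (hr : r.IsHermitian) (i : Fin n) :
    hr.eigenvalues i ≤ spec n r := by
  rw [spec, dif_pos hr]
  exact le_csSup (Set.Finite.bddAbove (Set.finite_range _)) ⟨i, rfl⟩

lemma spec_nonneg {n : ℕ} (hn : 0 < n) {r : Matrix (Fin n) (Fin n) ℝ} (hr : r.PosSemidef) :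
    0 ≤ spec n r := by
  have i : Fin n := ⟨0, hn⟩
  exact le_trans (hr.eigenvalues_nonneg i) (spec_eig hr.isHermitian i)

lemma trace_mul_nonneg_aux {n : ℕ} {A B : Matrix (Fin n) (Fin n) ℝ}
    (hA : A.PosSemidef) (hB : B.PosSemidef) : 0 ≤ (A * B).trace := by
  obtain ⟨C, rfl⟩ : ∃ C : Matrix (Fin n) (Fin n) ℝ, B = Cᴴ * C := by
    open scoped MatrixOrder in
    refine ⟨CFC.sqrt B, ?_⟩
    open scoped MatrixOrder in
    rw [(CFC.sqrt_nonneg B).posSemidef.1.eq, CFC.sqrt_mul_sqrt_self B hB.nonneg]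
  have h1 : (A * (Cᴴ * C)).trace = (C * A * Cᴴ).trace := by
    rw [← mul_assoc, Matrix.trace_mul_cycle]
  rw [h1]
  have h2 : (C * A * Cᴴ).PosSemidef := hA.mul_mul_conjTranspose_same C
  rw [Matrix.trace]
  apply Finset.sum_nonneg
  intro i _
  have := h2.dotProduct_mulVec_nonneg (Pi.single i 1)
  simpa [dotProduct, Matrix.mulVec, Pi.single_apply, Finset.sum_ite_eq,
    Finset.mul_sum] using this

lemma key_psd {n : ℕ} {r : Matrix (Fin n) (Fin n) ℝ} (hr : r.PosDef) :
    (spec n r • r - r * r).PosSemidef := by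
  have h := hr.isHermitian
  obtain ⟨c, hc⟩ : ∃ c, c = spec n r := ⟨_, rfl⟩
  rw [← hc]
  set U : Matrix (Fin n) (Fin n) ℝ := (h.eigenvectorUnitary : Matrix (Fin n) (Fin n) ℝ) with hUdef
  have hU : star U * U = 1 := (Unitary.mem_iff.mp h.eigenvectorUnitary.2).1
  have hst : r = U * Matrix.diagonal h.eigenvalues * star U := by
    have := h.spectral_theorem
    simpa [RCLike.ofReal_real_eq_id] using this
  have hD : c • r - r * r
      = U * Matrix.diagonal (fun i => c * h.eigenvalues i -
          h.eigenvalues i * h.eigenvalues i) * star U := by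
    conv_lhs => rw [hst]
    have hrr : U * Matrix.diagonal h.eigenvalues * star U *
        (U * Matrix.diagonal h.eigenvalues * star U)
        = U * (Matrix.diagonal h.eigenvalues * Matrix.diagonal h.eigenvalues) * star U := by
      have h1 : star U * (U * (Matrix.diagonal h.eigenvalues * star U))
          = Matrix.diagonal h.eigenvalues * star U := by
        rw [← mul_assoc, hU, one_mul]
      simp only [mul_assoc, h1]
    rw [hrr, Matrix.diagonal_mul_diagonal]
    have h2 : c • (U * Matrix.diagonal h.eigenvalues * star U)
        = U * Matrix.diagonal (fun i => c * h.eigenvalues i) * star U := by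
      have h3 : c • Matrix.diagonal h.eigenvalues
          = Matrix.diagonal (fun i => c * h.eigenvalues i) := by
        ext i j
        by_cases hij : i = j <;> simp [Matrix.diagonal_apply, hij]
      rw [← h3, ← Matrix.smul_mul, ← Matrix.mul_smul]
    rw [h2, ← Matrix.sub_mul, ← Matrix.mul_sub, ← Matrix.diagonal_sub]
  rw [hD]
  have hdiag : (Matrix.diagonal (fun i => c * h.eigenvalues i -
      h.eigenvalues i * h.eigenvalues i)).PosSemidef := by
    apply Matrix.PosSemidef.diagonal
    intro i
    have h1 : 0 ≤ h.eigenvalues i := hr.posSemidef.eigenvalues_nonneg i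
    have h2 : h.eigenvalues i ≤ c := hc ▸ spec_eig h i
    simpa using (by nlinarith : (0:ℝ) ≤ c * h.eigenvalues i - h.eigenvalues i * h.eigenvalues i)
  have := hdiag.mul_mul_conjTranspose_same U
  simpa [Matrix.star_eq_conjTranspose] using this

/-- Condition F6 in the positive cone: if `F` is `C¹` with positive definite gradient `F_r`,
orthogonally invariant, concave, with range `(a₀, ∞)` for finite `a₀` and satisfying F5⁺
on `K⁺`, then for positive definite `r ∈ Γ` with `a ≤ F(r) ≤ b`,
`ℰ₂ = F^{ij} r_{ik} r_{jk} ≤ (F(r) − a₀)|r| ≤ (b − a₀)|r|` (`|r|` the spectral norm), and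
consequently `ℰ₂ ≤ ε |r| 𝒯(r)` for `|r|` large. -/
theorem stmt19 (n : ℕ) (hn : 0 < n) (Γ : Set (Matrix (Fin n) (Fin n) ℝ))
    (F : Matrix (Fin n) (Fin n) ℝ → ℝ)
    (hopen : IsOpen Γ) (hconv : Convex ℝ Γ)
    (hcone : ∀ t : ℝ, 0 < t → ∀ r ∈ Γ, t • r ∈ Γ)
    (hsym : ∀ r ∈ Γ, r.IsHermitian)
    (hconc : ConcaveOn ℝ Γ F)
    (FrM : Matrix (Fin n) (Fin n) ℝ → Matrix (Fin n) (Fin n) ℝ)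
    (hgrad : ∀ s ∈ Γ, ∀ u : Matrix (Fin n) (Fin n) ℝ,
      HasDerivAt (fun t : ℝ => F (s + t • u)) (∑ i, ∑ j, FrM s i j * u i j) 0)
    (hFrpos : ∀ s ∈ Γ, (FrM s).PosDef)
    (hΓinv : ∀ Q : Matrix (Fin n) (Fin n) ℝ, Q * Qᵀ = 1 → ∀ s ∈ Γ, Q * s * Qᵀ ∈ Γ)
    (hFinv : ∀ Q : Matrix (Fin n) (Fin n) ℝ, Q * Qᵀ = 1 → ∀ s ∈ Γ, F (Q * s * Qᵀ) = F s)
    (a₀ : ℝ) (hrange : ∀ s ∈ Γ, a₀ < F s)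
    (hsurj : ∀ y : ℝ, a₀ < y → ∃ s ∈ Γ, F s = y)
    (hF5plus : ∀ a b : ℝ, a₀ < a → ∀ C : ℝ, ∃ R : ℝ, ∀ s ∈ Γ, s.PosDef →
      a ≤ F s → F s ≤ b → R ≤ spec n s → C ≤ (FrM s).trace) :
    ∀ a b : ℝ, a₀ < a →
      (∀ r ∈ Γ, r.PosDef → a ≤ F r → F r ≤ b →
        (∑ i, ∑ j, ∑ m, FrM r i j * r i m * r j m) ≤ (F r - a₀) * spec n r ∧
        (∑ i, ∑ j, ∑ m, FrM r i j * r i m * r j m) ≤ (b - a₀) * spec n r) ∧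
      (∀ ε : ℝ, 0 < ε → ∃ R : ℝ, ∀ r ∈ Γ, r.PosDef → a ≤ F r → F r ≤ b →
        R ≤ spec n r →
        (∑ i, ∑ j, ∑ m, FrM r i j * r i m * r j m) ≤ ε * spec n r * (FrM r).trace) := by
  intro a b ha
  have key : ∀ r ∈ Γ, r.PosDef →
      (∑ i, ∑ j, ∑ m, FrM r i j * r i m * r j m) ≤ (F r - a₀) * spec n r := by
    intro r hrΓ hpd
    set A := FrM r with hAdef
    have hrsym : ∀ p q, r p q = r q p := by
      intro p q
      have := congrFun (congrFun hpd.isHermitian q) p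
      simpa [Matrix.conjTranspose_apply] using this
    -- E₂ = trace (A * (r*r))
    have hE : (∑ i, ∑ j, ∑ m, A i j * r i m * r j m) = (A * (r * r)).trace := by
      simp only [Matrix.trace, Matrix.diag_apply, Matrix.mul_apply, Finset.mul_sum]
      refine Finset.sum_congr rfl fun i _ => Finset.sum_congr rfl fun j _ =>
        Finset.sum_congr rfl fun m _ => ?_
      rw [hrsym m i]
      ring
    -- T = trace (A * r)
    have hT : (∑ i, ∑ j, A i j * r i j) = (A * r).trace := by
      simp only [Matrix.trace, Matrix.diag_apply, Matrix.mul_apply]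
      refine Finset.sum_congr rfl fun i _ => Finset.sum_congr rfl fun j _ => ?_
      rw [hrsym i j]
    set T := ∑ i, ∑ j, A i j * r i j with hTdef
    -- E₂ ≤ spec * T
    have hET : (∑ i, ∑ j, ∑ m, A i j * r i m * r j m) ≤ spec n r * T := by
      have h0 : 0 ≤ (A * (spec n r • r - r * r)).trace :=
        trace_mul_nonneg_aux (hFrpos r hrΓ).posSemidef (key_psd hpd)
      have hlin : (A * (spec n r • r - r * r)).trace
          = spec n r * (A * r).trace - (A * (r * r)).trace := by
        rw [Matrix.mul_sub, Matrix.trace_sub, Matrix.mul_smul, Matrix.trace_smul, smul_eq_mul]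
      rw [hE, hT]
      rw [hlin] at h0
      linarith
    -- T ≤ F r - a₀ via concavity
    have hderiv : HasDerivAt (fun t : ℝ => F (r + t • r)) T 0 := hgrad r hrΓ r
    set g : ℝ → ℝ := fun t => F (r + t • r) with hgdef
    have hmem : ∀ t : ℝ, -1 < t → r + t • r ∈ Γ := by
      intro t ht
      have h1 : r + t • r = (1 + t) • r := by module
      rw [h1]
      exact hcone (1 + t) (by linarith) r hrΓ
    have hg0 : g 0 = F r := by simp [hgdef]
    have hgconc : ConcaveOn ℝ (Set.Ioi (-1 : ℝ)) g := by
      refine ⟨convex_Ioi _, ?_⟩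
      intro x hx y hy α β hα hβ hαβ
      have h2 := hconc.2 (hmem x hx) (hmem y hy) hα hβ hαβ
      have heq : α • (r + x • r) + β • (r + y • r) = r + (α * x + β * y) • r := by
        have h3 : α • (r + x • r) + β • (r + y • r)
            = (α + β) • r + (α * x + β * y) • r := by module
        rw [h3, hαβ, one_smul]
      rw [heq] at h2
      simpa [hgdef, smul_eq_mul] using h2
    have htangent : ∀ t : ℝ, -1 < t → t < 0 → g t ≤ g 0 + t * T := by
      intro t ht ht0
      have hC : T ≤ (g 0 - g t) / (0 - t) := by
        have htend : Filter.Tendsto (fun u => (g u - g 0) / (u - 0)) (𝓝[>] (0 : ℝ)) (𝓝 T) := by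
          have := hasDerivAt_iff_tendsto_slope.mp hderiv
          have h4 : Filter.Tendsto (slope g 0) (𝓝[>] (0 : ℝ)) (𝓝 T) :=
            this.mono_left (nhdsWithin_mono 0 (fun u hu => ne_of_gt hu))
          exact h4.congr fun u => slope_def_field g 0 u
        have hbound : ∀ u ∈ Set.Ioi (0 : ℝ), (g u - g 0) / (u - 0) ≤ (g 0 - g t) / (0 - t) := by
          intro u hu
          exact hgconc.slope_anti_adjacent ht (show u ∈ Set.Ioi (-1 : ℝ) from
            lt_trans (show (-1 : ℝ) < 0 by norm_num) hu) ht0 hu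
        exact le_of_tendsto htend (eventually_nhdsWithin_of_forall hbound)
      have h5 : T * (0 - t) ≤ g 0 - g t := (le_div_iff₀ (by linarith)).mp hC
      nlinarith [h5]
    have haT : T ≤ F r - a₀ := by
      have hev : ∀ᶠ t in 𝓝[>] (-1 : ℝ), a₀ ≤ g 0 + t * T := by
        filter_upwards [Ioo_mem_nhdsGT (show (-1 : ℝ) < 0 by norm_num)] with t ht
        exact le_trans (le_of_lt (hrange _ (hmem t ht.1))) (htangent t ht.1 ht.2)
      have htend2 : Filter.Tendsto (fun t : ℝ => g 0 + t * T) (𝓝[>] (-1 : ℝ))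
          (𝓝 (g 0 + (-1) * T)) :=
        ((continuous_const.add (continuous_id.mul continuous_const)).tendsto (-1)).mono_left
          nhdsWithin_le_nhds
      have := ge_of_tendsto htend2 hev
      rw [hg0] at this
      linarith
    have hspec : 0 ≤ spec n r := spec_nonneg hn hpd.posSemidef
    calc (∑ i, ∑ j, ∑ m, A i j * r i m * r j m) ≤ spec n r * T := hET
      _ ≤ spec n r * (F r - a₀) := mul_le_mul_of_nonneg_left haT hspec
      _ = (F r - a₀) * spec n r := mul_comm _ _
  constructor
  · intro r hrΓ hpd h1 h2
    have hspec : 0 ≤ spec n r := spec_nonneg hn hpd.posSemidef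
    refine ⟨key r hrΓ hpd, le_trans (key r hrΓ hpd) ?_⟩
    exact mul_le_mul_of_nonneg_right (by linarith) hspec
  · intro ε hε
    obtain ⟨R, hR⟩ := hF5plus a b ha ((b - a₀) / ε)
    refine ⟨R, fun r hrΓ hpd h1 h2 hRs => ?_⟩
    have hk := key r hrΓ hpd
    have hspec : 0 ≤ spec n r := spec_nonneg hn hpd.posSemidef
    have hTr := hR r hrΓ hpd h1 h2 hRs
    have hba : b - a₀ ≤ ε * (FrM r).trace := by
      rw [div_le_iff₀ hε] at hTr
      linarith [hTr]
    calc (∑ i, ∑ j, ∑ m, FrM r i j * r i m * r j m)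
        ≤ (F r - a₀) * spec n r := hk
      _ ≤ (b - a₀) * spec n r := mul_le_mul_of_nonneg_right (by linarith) hspec
      _ ≤ (ε * (FrM r).trace) * spec n r := mul_le_mul_of_nonneg_right hba hspec
      _ = ε * spec n r * (FrM r).trace := by ring
end
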